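/- Let x be a binary sequence of length n ≥ 1 and let x̌ = x‖x̄ be the concatenation of x with its bitwise complement (of length 2n). Then α_{x̌} = 2α_x + γ_x + (1/2)^n·δ_x, where the coefficients of x̌ are computed with respect to its length 2n. -/
import Mathlib


open Finset

/-- The coefficient `α_x`. -/
noncomputable def alphaC {n : ℕ} (x : Fin n → Bool) : ℝ :=
  (∑ i ∈ univ.filter (fun i : Fin n => x i = false),
     ∑ j ∈ univ.filter (fun j : Fin n => x j = false ∧ i < j),
       ((1:ℝ)/2) ^ ((j : ℕ) - (i : ℕ)))
  + ∑ i ∈ univ.filter (fun i : Fin n => x i = true),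
      ∑ j ∈ univ.filter (fun j : Fin n => x j = true ∧ i < j),
        ((1:ℝ)/2) ^ ((j : ℕ) - (i : ℕ))

/-- The coefficient `β_x`. -/
noncomputable def betaC {n : ℕ} (x : Fin n → Bool) : ℝ :=
  (∑ i ∈ univ.filter (fun i : Fin n => x i = false),
     ∑ j ∈ univ.filter (fun j : Fin n => x j = false ∧ i < j),
       ((1:ℝ)/2) ^ (n - ((j : ℕ) - (i : ℕ))))
  + ∑ i ∈ univ.filter (fun i : Fin n => x i = true),
      ∑ j ∈ univ.filter (fun j : Fin n => x j = true ∧ i < j),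
        ((1:ℝ)/2) ^ (n - ((j : ℕ) - (i : ℕ)))

/-- The coefficient `γ_x`. -/
noncomputable def gammaC {n : ℕ} (x : Fin n → Bool) : ℝ :=
  (∑ i ∈ univ.filter (fun i : Fin n => x i = false),
     ∑ j ∈ univ.filter (fun j : Fin n => x j = true ∧ i < j),
       ((1:ℝ)/2) ^ (n - ((j : ℕ) - (i : ℕ))))
  + ∑ i ∈ univ.filter (fun i : Fin n => x i = true),
      ∑ j ∈ univ.filter (fun j : Fin n => x j = false ∧ i < j),
        ((1:ℝ)/2) ^ (n - ((j : ℕ) - (i : ℕ)))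

/-- The coefficient `δ_x`. -/
noncomputable def deltaC {n : ℕ} (x : Fin n → Bool) : ℝ :=
  (∑ i ∈ univ.filter (fun i : Fin n => x i = false),
     ∑ j ∈ univ.filter (fun j : Fin n => x j = true ∧ i < j),
       ((1:ℝ)/2) ^ ((j : ℕ) - (i : ℕ)))
  + ∑ i ∈ univ.filter (fun i : Fin n => x i = true),
      ∑ j ∈ univ.filter (fun j : Fin n => x j = false ∧ i < j),
        ((1:ℝ)/2) ^ ((j : ℕ) - (i : ℕ))

lemma alphaC_eq {m : ℕ} (y : Fin m → Bool) :
    alphaC y = ∑ i : Fin m, ∑ j : Fin m,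
      if y i = y j ∧ i < j then ((1:ℝ)/2) ^ ((j:ℕ) - (i:ℕ)) else 0 := by
  unfold alphaC
  simp only [Finset.sum_filter]
  rw [← Finset.sum_add_distrib]
  refine Finset.sum_congr rfl fun i _ => ?_
  cases hyi : y i <;>
    · simp only [hyi, if_true, if_false, reduceCtorEq, Finset.sum_const_zero, add_zero, zero_add]
      refine Finset.sum_congr rfl fun j _ => ?_
      cases hyj : y j <;> simp [hyj]

lemma gammaC_eq {m : ℕ} (y : Fin m → Bool) :
    gammaC y = ∑ i : Fin m, ∑ j : Fin m,
      if y i ≠ y j ∧ i < j then ((1:ℝ)/2) ^ (m - ((j:ℕ) - (i:ℕ))) else 0 := by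
  unfold gammaC
  simp only [Finset.sum_filter]
  rw [← Finset.sum_add_distrib]
  refine Finset.sum_congr rfl fun i _ => ?_
  cases hyi : y i <;>
    · simp only [hyi, if_true, if_false, reduceCtorEq, Finset.sum_const_zero, add_zero, zero_add]
      refine Finset.sum_congr rfl fun j _ => ?_
      cases hyj : y j <;> simp [hyj]

lemma deltaC_eq {m : ℕ} (y : Fin m → Bool) :
    deltaC y = ∑ i : Fin m, ∑ j : Fin m,
      if y i ≠ y j ∧ i < j then ((1:ℝ)/2) ^ ((j:ℕ) - (i:ℕ)) else 0 := by
  unfold deltaC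
  simp only [Finset.sum_filter]
  rw [← Finset.sum_add_distrib]
  refine Finset.sum_congr rfl fun i _ => ?_
  cases hyi : y i <;>
    · simp only [hyi, if_true, if_false, reduceCtorEq, Finset.sum_const_zero, add_zero, zero_add]
      refine Finset.sum_congr rfl fun j _ => ?_
      cases hyj : y j <;> simp [hyj]

lemma cross_sum (n : ℕ) (x : Fin n → Bool) :
    (∑ i : Fin n, ∑ j : Fin n,
      if x i = !x j then ((1:ℝ)/2) ^ (n + (j:ℕ) - (i:ℕ)) else 0)
    = (∑ i : Fin n, ∑ j : Fin n,
        if x i ≠ x j ∧ i < j then ((1:ℝ)/2) ^ (n - ((j:ℕ) - (i:ℕ))) else 0)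
      + ((1:ℝ)/2) ^ n * ∑ i : Fin n, ∑ j : Fin n,
          if x i ≠ x j ∧ i < j then ((1:ℝ)/2) ^ ((j:ℕ) - (i:ℕ)) else 0 := by
  have key : ∀ i j : Fin n,
      (if x i = !x j then ((1:ℝ)/2) ^ (n + (j:ℕ) - (i:ℕ)) else 0)
      = (if x j ≠ x i ∧ j < i then ((1:ℝ)/2) ^ (n - ((i:ℕ) - (j:ℕ))) else 0)
        + (if x i ≠ x j ∧ i < j then ((1:ℝ)/2)^n * ((1:ℝ)/2) ^ ((j:ℕ) - (i:ℕ)) else 0) := by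
    intro i j
    rcases lt_trichotomy i j with h | h | h
    · have hij : (i:ℕ) < (j:ℕ) := h
      have he : n + (j:ℕ) - (i:ℕ) = n + ((j:ℕ) - (i:ℕ)) :=
        Nat.add_sub_assoc hij.le n
      cases hx : x i <;> cases hy : x j <;>
        simp [hx, hy, h, lt_asymm h, he, pow_add]
    · subst h
      cases hx : x i <;> simp [hx, lt_irrefl]
    · have hij : (j:ℕ) < (i:ℕ) := h
      have he : n + (j:ℕ) - (i:ℕ) = n - ((i:ℕ) - (j:ℕ)) := by omega
      cases hx : x i <;> cases hy : x j <;>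
        simp [hx, hy, h, lt_asymm h, he, ne_comm]
  calc (∑ i : Fin n, ∑ j : Fin n,
      if x i = !x j then ((1:ℝ)/2) ^ (n + (j:ℕ) - (i:ℕ)) else 0)
      = (∑ i : Fin n, ∑ j : Fin n,
          (if x j ≠ x i ∧ j < i then ((1:ℝ)/2) ^ (n - ((i:ℕ) - (j:ℕ))) else 0))
        + (∑ i : Fin n, ∑ j : Fin n,
          (if x i ≠ x j ∧ i < j then ((1:ℝ)/2)^n * ((1:ℝ)/2) ^ ((j:ℕ) - (i:ℕ)) else 0)) := by
        rw [← Finset.sum_add_distrib]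
        refine Finset.sum_congr rfl fun i _ => ?_
        rw [← Finset.sum_add_distrib]
        exact Finset.sum_congr rfl fun j _ => key i j
    _ = _ := by
        rw [Finset.sum_comm]
        congr 1
        rw [Finset.mul_sum]
        refine Finset.sum_congr rfl fun i _ => ?_
        rw [Finset.mul_sum]
        refine Finset.sum_congr rfl fun j _ => ?_
        split_ifs with h
        · ring
        · ring

/-- Lemma 3(b): `α_{x‖x̄} = 2α_x + γ_x + (1/2)^n·δ_x`. -/
theorem alpha_append_compl (n : ℕ) (hn : 1 ≤ n) (x : Fin n → Bool) :
    alphaC (Fin.append x (fun i => !(x i))) =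
      2 * alphaC x + gammaC x + ((1:ℝ)/2) ^ n * deltaC x := by
  rw [alphaC_eq, alphaC_eq, gammaC_eq, deltaC_eq]
  rw [Fin.sum_univ_add]
  simp only [Fin.sum_univ_add, Fin.append_left, Fin.append_right]
  have hlt1 : ∀ i j : Fin n, Fin.castAdd n i < Fin.castAdd n j ↔ i < j := by
    intro i j
    rw [Fin.lt_def, Fin.lt_def, Fin.coe_castAdd, Fin.coe_castAdd]
  have hlt2 : ∀ i j : Fin n, Fin.natAdd n i < Fin.natAdd n j ↔ i < j := by
    intro i j
    rw [Fin.lt_def, Fin.lt_def, Fin.coe_natAdd, Fin.coe_natAdd]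
    omega
  have hlt3 : ∀ i j : Fin n, Fin.castAdd n i < Fin.natAdd n j := by
    intro i j
    rw [Fin.lt_def, Fin.coe_castAdd, Fin.coe_natAdd]
    have := i.isLt; omega
  have hlt4 : ∀ i j : Fin n, ¬ (Fin.natAdd n i < Fin.castAdd n j) := by
    intro i j
    rw [Fin.lt_def, Fin.coe_natAdd, Fin.coe_castAdd]
    have := j.isLt; omega
  have e1 : (∑ i : Fin n, ∑ j : Fin n,
      if Fin.append x (fun i => !(x i)) (Fin.castAdd n i)
         = Fin.append x (fun i => !(x i)) (Fin.castAdd n j)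
         ∧ Fin.castAdd n i < Fin.castAdd n j
      then ((1:ℝ)/2) ^ (((Fin.castAdd n j : Fin (n+n)):ℕ) - ((Fin.castAdd n i : Fin (n+n)):ℕ)) else 0)
      = ∑ i : Fin n, ∑ j : Fin n,
        if x i = x j ∧ i < j then ((1:ℝ)/2) ^ ((j:ℕ) - (i:ℕ)) else 0 := by
    refine Finset.sum_congr rfl fun i _ => Finset.sum_congr rfl fun j _ => ?_
    simp [Fin.append_left, hlt1]
  simp only [hlt1, hlt2, hlt3, hlt4, and_true, and_false, if_false,
    Fin.coe_castAdd, Fin.coe_natAdd]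
  have e2 : (∑ i : Fin n, ∑ j : Fin n,
      if (!x i) = !x j ∧ i < j then ((1:ℝ)/2) ^ (n + (j:ℕ) - (n + (i:ℕ))) else 0)
      = ∑ i : Fin n, ∑ j : Fin n,
        if x i = x j ∧ i < j then ((1:ℝ)/2) ^ ((j:ℕ) - (i:ℕ)) else 0 := by
    refine Finset.sum_congr rfl fun i _ => Finset.sum_congr rfl fun j _ => ?_
    have h : n + (j:ℕ) - (n + (i:ℕ)) = (j:ℕ) - (i:ℕ) := by omega
    simp [h]
  simp only [Finset.sum_const_zero, zero_add, e2, Finset.sum_add_distrib]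
  rw [cross_sum]
  ring
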